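/- Define c(m,n,k,i,j) = Σ_{l=0}^{k} (-1)^l · C(i+j-k, i-l) · C(m-l, k-l) · C(n-k+l, l). Suppose k > 0, n ≥ k, and n + k is odd. Then for every nonnegative integer j with (n+k-2j, j) in the domain for parameters (2k, n, k), one has c(2k, n, k, n+k-2j, j) = 0. -/

import Mathlib

open Finset

/-- Integer binomial coefficient: `C(a,b) = 0` when `b < 0` or `b > a`. -/
def ch (a b : ℤ) : ℤ := if 0 ≤ b ∧ b ≤ a then ((a.toNat).choose b.toNat : ℤ) else 0

/-- Clebsch-Gordan sum `c_{m,n,k}(i,j)`. -/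
def cg (m n k i j : ℕ) : ℤ :=
  ∑ l ∈ Finset.range (k+1),
    (-1:ℤ)^l * ch ((i:ℤ)+(j:ℤ)-(k:ℤ)) ((i:ℤ)-(l:ℤ))
      * ch ((m:ℤ)-(l:ℤ)) ((k:ℤ)-(l:ℤ)) * ch ((n:ℤ)-(k:ℤ)+(l:ℤ)) (l:ℤ)

/-- Trinomial coefficient `(a+b+c)! / (a! b! c!)`. -/
def mult (a b c : ℕ) : ℕ := (a+b+c).factorial / (a.factorial * b.factorial * c.factorial)


/-- Key identity (E): `∑ b, (-1)^b C(M,b) C(A+M-b, a-b) = C(A,a)`. -/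
lemma lemE : ∀ (M A a : ℕ),
    (∑ b ∈ Finset.range (a+1),
      (-1:ℤ)^b * (M.choose b : ℤ) * ((A+M-b).choose (a-b) : ℤ)) = (A.choose a : ℤ) := by
  intro M
  induction M with
  | zero =>
    intro A a
    rw [Finset.sum_eq_single 0]
    · simp
    · intro b _ hb
      rcases Nat.exists_eq_succ_of_ne_zero hb with ⟨c, rfl⟩
      simp [Nat.choose_eq_zero_of_lt (Nat.succ_pos c)]
    · intro h; exact absurd (Finset.mem_range.2 (Nat.succ_pos a)) h
  | succ M ih =>
    intro A a
    have split : ∀ b ∈ Finset.range (a+1),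
        (-1:ℤ)^b * ((M+1).choose b : ℤ) * ((A+(M+1)-b).choose (a-b) : ℤ)
        = (-1:ℤ)^b * (M.choose b : ℤ) * (((A+1)+M-b).choose (a-b) : ℤ)
          + (if b = 0 then 0 else (-1:ℤ)^b * (M.choose (b-1) : ℤ) * ((A+(M+1)-b).choose (a-b) : ℤ)) := by
      intro b _
      rcases b with _ | c
      · have e : A + (M+1) - 0 = (A+1) + M - 0 := by omega
        simp [e]
      · rw [if_neg (Nat.succ_ne_zero c)]
        have h1 : (M+1).choose (c+1) = M.choose c + M.choose (c+1) := Nat.choose_succ_succ M c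
        have h2 : A + (M+1) - (c+1) = (A+1) + M - (c+1) := by omega
        have h3 : c + 1 - 1 = c := by omega
        rw [h1, h2, h3]
        push_cast
        ring
    rw [Finset.sum_congr rfl split, Finset.sum_add_distrib, ih (A+1) a]
    have h3 : (∑ b ∈ Finset.range (a+1),
        (if b = 0 then 0 else (-1:ℤ)^b * (M.choose (b-1) : ℤ) * ((A+(M+1)-b).choose (a-b) : ℤ)))
        = -(if a = 0 then 0 else (A.choose (a-1) : ℤ)) := by
      rw [Finset.sum_range_succ']
      rcases a with _ | a'
      · simp
      · rw [if_neg (Nat.succ_ne_zero a')]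
        have hc : ∀ c ∈ Finset.range (a'+1),
            (if c+1 = 0 then 0 else (-1:ℤ)^(c+1) * (M.choose (c+1-1) : ℤ) * ((A+(M+1)-(c+1)).choose (a'+1-(c+1)) : ℤ))
            = -((-1:ℤ)^c * (M.choose c : ℤ) * ((A+M-c).choose (a'-c) : ℤ)) := by
          intro c _
          rw [if_neg (Nat.succ_ne_zero c)]
          have e1 : A+(M+1)-(c+1) = A+M-c := by omega
          have e2 : a'+1-(c+1) = a'-c := by omega
          have e3 : c+1-1 = c := by omega
          rw [e1, e2, e3, pow_succ]
          ring
        rw [Finset.sum_congr rfl hc]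
        simp only [if_pos, if_true, add_zero, Nat.succ_sub_one]
        rw [Finset.sum_neg_distrib, ih A a']
    rw [h3]
    rcases a with _ | a'
    · simp
    · rw [if_neg (Nat.succ_ne_zero a')]
      have h4 : (A+1).choose (a'+1) = A.choose a' + A.choose (a'+1) := Nat.choose_succ_succ A a'
      have h5 : a' + 1 - 1 = a' := by omega
      rw [h4, h5]
      push_cast
      ring


/-- `C(A,u) C(A-u,v) = C(A,v) C(A-v,u)`. -/
lemma choose_swap (A u v : ℕ) :
    A.choose u * (A-u).choose v = A.choose v * (A-v).choose u := by
  by_cases h : u + v ≤ A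
  · have h1 : A.choose (u+v) * (u+v).choose u = A.choose u * (A-u).choose v := by
      have := Nat.choose_mul (n := A) (Nat.le_add_right u v)
      simpa [Nat.add_sub_cancel_left] using this
    have h2 : A.choose (u+v) * (u+v).choose v = A.choose v * (A-v).choose u := by
      have := Nat.choose_mul (n := A) (Nat.le_add_left v u)
      simpa [Nat.add_sub_cancel] using this
    have h3 : (u+v).choose u = (u+v).choose v := Nat.choose_symm_add
    rw [← h1, ← h2, h3]
  · push_neg at h
    by_cases hu : u ≤ A
    · by_cases hv : v ≤ A
      · rw [Nat.choose_eq_zero_of_lt (by omega : A - u < v),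
            Nat.choose_eq_zero_of_lt (by omega : A - v < u)]
        ring
      · rw [Nat.choose_eq_zero_of_lt (by omega : A < v)]
        rw [Nat.choose_eq_zero_of_lt (by omega : A - u < v)]
        ring
    · by_cases hv : v ≤ A
      · rw [Nat.choose_eq_zero_of_lt (by omega : A < u),
            Nat.choose_eq_zero_of_lt (by omega : A - v < u)]
        ring
      · rw [Nat.choose_eq_zero_of_lt (by omega : A < u),
            Nat.choose_eq_zero_of_lt (by omega : A < v)]
        ring

/-- `C(A,x) C(x,y) = C(A,x-y) C(A-(x-y), y)` for `y ≤ x`. -/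
lemma tri (A x y : ℕ) (hyx : y ≤ x) :
    A.choose x * x.choose y = A.choose (x-y) * (A-(x-y)).choose y := by
  by_cases hxA : x ≤ A
  · have h1 := Nat.choose_mul (n := A) hyx
    rw [h1, choose_swap]
  · rw [Nat.choose_eq_zero_of_lt (by omega : A < x)]
    by_cases h2 : x - y ≤ A
    · rw [Nat.choose_eq_zero_of_lt (by omega : A - (x-y) < y)]
      ring
    · rw [Nat.choose_eq_zero_of_lt (by omega : A < x - y)]
      ring


lemma sign_sub (a b : ℕ) (h : b ≤ a) : (-1:ℤ)^(a-b) = (-1)^a * (-1)^b := by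
  have h2 : (-1:ℤ)^(a-b) * (-1)^(2*b) = (-1)^a * (-1)^b := by
    rw [← pow_add, ← pow_add]
    congr 1
    omega
  simpa [pow_mul] using h2

/-- Inner sum evaluation (B'). -/
lemma Bprime (A i a : ℕ) (hiA : i ≤ 2*A) :
    (∑ l ∈ Finset.range (a+1),
      (if l ≤ i then (-1:ℤ)^l * (A.choose (i-l) : ℤ) * ((i-l).choose (a-l) : ℤ)
          * ((2*A-i+l).choose l : ℤ) else 0))
    = if a ≤ i then (-1:ℤ)^a * (A.choose a : ℤ) * (A.choose (i-a) : ℤ) else 0 := by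
  by_cases hai : a ≤ i
  · rw [if_pos hai]
    have key : ∀ l ∈ Finset.range (a+1),
        (if l ≤ i then (-1:ℤ)^l * (A.choose (i-l) : ℤ) * ((i-l).choose (a-l) : ℤ)
            * ((2*A-i+l).choose l : ℤ) else 0)
        = (A.choose (i-a) : ℤ) *
            ((-1:ℤ)^l * ((A-(i-a)).choose (a-l) : ℤ) * ((2*A-i+l).choose l : ℤ)) := by
      intro l hl
      have hla : l ≤ a := by simpa [Nat.lt_succ_iff] using Finset.mem_range.mp hl
      rw [if_pos (le_trans hla hai)]
      have ht := tri A (i-l) (a-l) (by omega)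
      have e : (i-l) - (a-l) = i-a := by omega
      rw [e] at ht
      have htz : ((A.choose (i-l) : ℤ) * ((i-l).choose (a-l) : ℤ))
          = (A.choose (i-a) : ℤ) * ((A-(i-a)).choose (a-l) : ℤ) := by exact_mod_cast ht
      calc (-1:ℤ)^l * (A.choose (i-l) : ℤ) * ((i-l).choose (a-l) : ℤ) * ((2*A-i+l).choose l : ℤ)
          = ((A.choose (i-l) : ℤ) * ((i-l).choose (a-l) : ℤ)) * ((-1:ℤ)^l * ((2*A-i+l).choose l : ℤ)) := by ring
        _ = ((A.choose (i-a) : ℤ) * ((A-(i-a)).choose (a-l) : ℤ)) * ((-1:ℤ)^l * ((2*A-i+l).choose l : ℤ)) := by rw [htz]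
        _ = (A.choose (i-a) : ℤ) * ((-1:ℤ)^l * ((A-(i-a)).choose (a-l) : ℤ) * ((2*A-i+l).choose l : ℤ)) := by ring
    rw [Finset.sum_congr rfl key, ← Finset.mul_sum]
    by_cases hqA : i - a ≤ A
    · have inner : (∑ l ∈ Finset.range (a+1),
          (-1:ℤ)^l * ((A-(i-a)).choose (a-l) : ℤ) * ((2*A-i+l).choose l : ℤ))
          = (-1:ℤ)^a * (A.choose a : ℤ) := by
        rw [← Finset.sum_range_reflect]
        have hc : ∀ b ∈ Finset.range (a+1),
            (-1:ℤ)^(a+1-1-b) * ((A-(i-a)).choose (a-(a+1-1-b)) : ℤ)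
              * ((2*A-i+(a+1-1-b)).choose (a+1-1-b) : ℤ)
            = (-1:ℤ)^a * ((-1:ℤ)^b * ((A-(i-a)).choose b : ℤ)
              * ((A+(A-(i-a))-b).choose (a-b) : ℤ)) := by
          intro b hb
          have hba : b ≤ a := by simpa [Nat.lt_succ_iff] using Finset.mem_range.mp hb
          have e1 : a+1-1-b = a-b := by omega
          have e2 : a-(a-b) = b := by omega
          have e3 : 2*A-i+(a-b) = A+(A-(i-a))-b := by omega
          rw [e1, e2, e3, sign_sub a b hba]
          ring
        rw [Finset.sum_congr rfl hc, ← Finset.mul_sum, lemE (A-(i-a)) A a]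
      rw [inner]
      ring
    · rw [Nat.choose_eq_zero_of_lt (by omega : A < i - a)]
      push_cast
      ring
  · rw [if_neg hai]
    apply Finset.sum_eq_zero
    intro l hl
    have hla : l ≤ a := by simpa [Nat.lt_succ_iff] using Finset.mem_range.mp hl
    by_cases hli : l ≤ i
    · rw [if_pos hli, Nat.choose_eq_zero_of_lt (by omega : i - l < a - l)]
      push_cast
      ring
    · rw [if_neg hli]


/-- Vandermonde step. -/
lemma vand (k i l : ℕ) (hik : i ≤ 2*k) (hl : l ≤ k) (hli : l ≤ i) :
    ((2*k-l).choose (k-l)) = ∑ a ∈ Finset.range (k+1),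
      (if l ≤ a then ((i-l).choose (a-l)) * ((2*k-i).choose (k-a)) else 0) := by
  have h0 : 2*k-l = (i-l) + (2*k-i) := by omega
  rw [h0, Nat.add_choose_eq, Finset.Nat.sum_antidiagonal_eq_sum_range_succ_mk]
  have h1 : (∑ a ∈ Finset.range (k+1),
      (if l ≤ a then ((i-l).choose (a-l)) * ((2*k-i).choose (k-a)) else 0))
      = ∑ a ∈ Finset.Ico l (k+1), ((i-l).choose (a-l)) * ((2*k-i).choose (k-a)) := by
    rw [← Finset.sum_filter]
    congr 1
    ext x
    simp only [Finset.mem_filter, Finset.mem_range, Finset.mem_Ico]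
    tauto
  rw [h1, Finset.sum_Ico_eq_sum_range]
  have h2 : k + 1 - l = k - l + 1 := by omega
  rw [h2]
  apply Finset.sum_congr rfl
  intro c hc
  have hck : c ≤ k - l := by simpa [Nat.lt_succ_iff] using Finset.mem_range.mp hc
  have e1 : l + c - l = c := by omega
  have e2 : k - (l + c) = k - l - c := by omega
  rw [e1, e2]


lemma reflCh (k i b : ℕ) (hik : i ≤ 2*k) (hbi : b ≤ i) :
    (if i-b ≤ k then ((2*k-i).choose (k-(i-b)) : ℤ) else 0)
    = (if b ≤ k then ((2*k-i).choose (k-b) : ℤ) else 0) := by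
  by_cases hb : b ≤ k
  · by_cases hib : i - b ≤ k
    · rw [if_pos hib, if_pos hb]
      have h1 : k - b ≤ 2*k - i := by omega
      have h2 : (2*k-i) - (k-b) = k - (i-b) := by omega
      rw [← Nat.choose_symm h1, h2]
    · rw [if_neg hib, if_pos hb]
      rw [Nat.choose_eq_zero_of_lt (by omega : 2*k-i < k-b)]
      simp
  · by_cases hib : i - b ≤ k
    · rw [if_pos hib, if_neg hb]
      rw [Nat.choose_eq_zero_of_lt (by omega : 2*k-i < k-(i-b))]
      simp
    · rw [if_neg hib, if_neg hb]

lemma keyV (A k i : ℕ) (hodd : Odd i) (hik : i ≤ 2*k) (hiA : i ≤ 2*A) :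
    (∑ l ∈ Finset.range (k+1),
      (if l ≤ i then (-1:ℤ)^l * (A.choose (i-l) : ℤ) * ((2*k-l).choose (k-l) : ℤ)
          * ((2*A-i+l).choose l : ℤ) else 0)) = 0 := by
  set u : ℕ → ℕ → ℤ := fun l a => ((2*k-i).choose (k-a) : ℤ) *
      (if l ≤ i ∧ l ≤ a then (-1:ℤ)^l * (A.choose (i-l) : ℤ) * ((i-l).choose (a-l) : ℤ)
          * ((2*A-i+l).choose l : ℤ) else 0) with hu
  have step1 : ∀ l ∈ Finset.range (k+1),
      (if l ≤ i then (-1:ℤ)^l * (A.choose (i-l) : ℤ) * ((2*k-l).choose (k-l) : ℤ)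
          * ((2*A-i+l).choose l : ℤ) else 0) = ∑ a ∈ Finset.range (k+1), u l a := by
    intro l hl
    have hlk : l ≤ k := by simpa [Nat.lt_succ_iff] using Finset.mem_range.mp hl
    by_cases hli : l ≤ i
    · rw [if_pos hli]
      have hre : ∀ a ∈ Finset.range (k+1), u l a
          = ((-1:ℤ)^l * (A.choose (i-l) : ℤ) * ((2*A-i+l).choose l : ℤ)) *
            (if l ≤ a then ((i-l).choose (a-l) : ℤ) * ((2*k-i).choose (k-a) : ℤ) else 0) := by
        intro a _
        simp only [hu]
        by_cases h : l ≤ a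
        · rw [if_pos ⟨hli, h⟩, if_pos h]; ring
        · rw [if_neg (by tauto), if_neg h]; ring
      rw [Finset.sum_congr rfl hre, ← Finset.mul_sum]
      have hvz : (∑ a ∈ Finset.range (k+1),
          (if l ≤ a then ((i-l).choose (a-l) : ℤ) * ((2*k-i).choose (k-a) : ℤ) else 0))
          = ((2*k-l).choose (k-l) : ℤ) := by
        rw [vand k i l hik hlk hli]
        rw [Nat.cast_sum]
        apply Finset.sum_congr rfl
        intro a _
        split_ifs
        · push_cast; ring
        · simp
      rw [hvz]
      ring
    · rw [if_neg hli]
      symm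
      apply Finset.sum_eq_zero
      intro a _
      simp only [hu]
      rw [if_neg (by tauto)]
      ring
  rw [Finset.sum_congr rfl step1, Finset.sum_comm]
  have step3 : ∀ a ∈ Finset.range (k+1), (∑ l ∈ Finset.range (k+1), u l a)
      = ((2*k-i).choose (k-a) : ℤ) *
        (if a ≤ i then (-1:ℤ)^a * (A.choose a : ℤ) * (A.choose (i-a) : ℤ) else 0) := by
    intro a ha
    have hak : a ≤ k := by simpa [Nat.lt_succ_iff] using Finset.mem_range.mp ha
    have hsub : Finset.range (a+1) ⊆ Finset.range (k+1) := by
      apply Finset.range_subset_range.mpr; omega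
    have hzero : ∀ x ∈ Finset.range (k+1), x ∉ Finset.range (a+1) → u x a = 0 := by
      intro x _ hx
      have : ¬ x ≤ a := by simpa [Nat.lt_succ_iff] using hx
      simp only [hu]
      rw [if_neg (by tauto)]
      ring
    rw [← Finset.sum_subset hsub hzero]
    have hre2 : ∀ l ∈ Finset.range (a+1), u l a
        = ((2*k-i).choose (k-a) : ℤ) *
          (if l ≤ i then (-1:ℤ)^l * (A.choose (i-l) : ℤ) * ((i-l).choose (a-l) : ℤ)
            * ((2*A-i+l).choose l : ℤ) else 0) := by
      intro l hl
      have hla : l ≤ a := by simpa [Nat.lt_succ_iff] using Finset.mem_range.mp hl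
      simp only [hu]
      by_cases h : l ≤ i
      · rw [if_pos ⟨h, hla⟩, if_pos h]
      · rw [if_neg (by tauto), if_neg h]
    rw [Finset.sum_congr rfl hre2, ← Finset.mul_sum, Bprime A i a hiA]
  rw [Finset.sum_congr rfl step3]
  -- step 4: final reflection
  set V : ℕ → ℤ := fun a => (-1:ℤ)^a * (A.choose a : ℤ) * (A.choose (i-a) : ℤ) *
      (if a ≤ k then ((2*k-i).choose (k-a) : ℤ) else 0) with hV
  set W : ℕ → ℤ := fun a =>
      (if a ≤ i ∧ a ≤ k then (-1:ℤ)^a * (A.choose a : ℤ) * (A.choose (i-a) : ℤ)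
        * ((2*k-i).choose (k-a) : ℤ) else 0) with hW
  have E1 : (∑ a ∈ Finset.range (k+1), ((2*k-i).choose (k-a) : ℤ) *
        (if a ≤ i then (-1:ℤ)^a * (A.choose a : ℤ) * (A.choose (i-a) : ℤ) else 0))
      = ∑ a ∈ Finset.range (i+k+1), W a := by
    have c1 : ∀ a ∈ Finset.range (k+1), ((2*k-i).choose (k-a) : ℤ) *
        (if a ≤ i then (-1:ℤ)^a * (A.choose a : ℤ) * (A.choose (i-a) : ℤ) else 0) = W a := by
      intro a ha
      have hak : a ≤ k := by simpa [Nat.lt_succ_iff] using Finset.mem_range.mp ha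
      simp only [hW]
      by_cases h : a ≤ i
      · rw [if_pos h, if_pos ⟨h, hak⟩]; ring
      · rw [if_neg h, if_neg (by tauto)]; ring
    rw [Finset.sum_congr rfl c1]
    apply Finset.sum_subset (Finset.range_subset_range.mpr (by omega : k+1 ≤ i+k+1))
    intro x _ hx
    have hxk : ¬ x ≤ k := by simpa [Nat.lt_succ_iff] using hx
    try simp only [hW]
    rw [if_neg (by tauto)]
  have E2 : (∑ a ∈ Finset.range (i+k+1), W a) = ∑ a ∈ Finset.range (i+1), V a := by
    rw [← Finset.sum_subset (Finset.range_subset_range.mpr (by omega : i+1 ≤ i+k+1))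
        (by intro x _ hx
            have hxi : ¬ x ≤ i := by simpa [Nat.lt_succ_iff] using hx
            try simp only [hW]
            rw [if_neg (by tauto)])]
    apply Finset.sum_congr rfl
    intro a ha
    have hai : a ≤ i := by simpa [Nat.lt_succ_iff] using Finset.mem_range.mp ha
    simp only [hW, hV]
    by_cases h : a ≤ k
    · rw [if_pos ⟨hai, h⟩, if_pos h]
    · rw [if_neg (by tauto), if_neg h]; ring
  rw [E1, E2]
  -- reflection
  have hrefl := Finset.sum_range_reflect V (i+1)
  have hneg : ∀ b ∈ Finset.range (i+1), V (i+1-1-b) = - V b := by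
    intro b hb
    have hbi : b ≤ i := by simpa [Nat.lt_succ_iff] using Finset.mem_range.mp hb
    have e1 : i+1-1-b = i-b := by omega
    have e2 : i-(i-b) = b := by omega
    simp only [hV]
    rw [e1, e2, sign_sub i b hbi, hodd.neg_one_pow, reflCh k i b hik hbi]
    ring
  rw [Finset.sum_congr rfl hneg] at hrefl
  rw [Finset.sum_neg_distrib] at hrefl
  linarith

lemma ch_nat (a b : ℕ) : ch (a:ℤ) (b:ℤ) = (a.choose b : ℤ) := by
  unfold ch
  by_cases h : b ≤ a
  · rw [if_pos ⟨Int.natCast_nonneg b, by exact_mod_cast h⟩]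
    simp
  · rw [if_neg (by push_neg; intro _; exact_mod_cast Nat.lt_of_not_le h)]
    rw [Nat.choose_eq_zero_of_lt (by omega)]
    simp

lemma ch_neg (a b : ℤ) (h : b < 0) : ch a b = 0 := by
  unfold ch
  rw [if_neg (by omega)]

theorem stmt_13 (n k j : ℕ) (hk : 0 < k) (hkn : k ≤ n) (hodd : Odd (n + k))
    (hjn : j ≤ n) (h1 : 2*j ≤ n + k) (h2 : n ≤ 2*j + k) :
    cg (2*k) n k (n + k - 2*j) j = 0 := by
  have hik : (n+k-2*j) ≤ 2*k := by omega
  have hiA : (n+k-2*j) ≤ 2*(n-j) := by omega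
  have hodd' : Odd (n+k-2*j) := by
    rcases hodd with ⟨m, hm⟩
    exact ⟨m-j, by omega⟩
  have hkey := keyV (n-j) k (n+k-2*j) hodd' hik hiA
  rw [cg, ← hkey]
  apply Finset.sum_congr rfl
  intro l hl
  have hlk : l ≤ k := by simpa [Nat.lt_succ_iff] using Finset.mem_range.mp hl
  by_cases hli : l ≤ n+k-2*j
  · rw [if_pos hli]
    have c1 : ((n+k-2*j : ℕ) : ℤ) + (j:ℤ) - (k:ℤ) = ((n-j : ℕ) : ℤ) := by omega
    have c2 : ((n+k-2*j : ℕ) : ℤ) - (l:ℤ) = ((n+k-2*j-l : ℕ) : ℤ) := by omega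
    have c3 : ((2*k : ℕ) : ℤ) - (l:ℤ) = ((2*k-l : ℕ) : ℤ) := by omega
    have c4 : (k : ℤ) - (l:ℤ) = ((k-l : ℕ) : ℤ) := by omega
    have c5 : (n : ℤ) - (k:ℤ) + (l:ℤ) = ((n-k+l : ℕ) : ℤ) := by omega
    have e : 2*(n-j)-(n+k-2*j)+l = n-k+l := by omega
    rw [c1, c2, c3, c4, c5, ch_nat, ch_nat, ch_nat, e]
  · rw [if_neg hli]
    rw [ch_neg _ _ (by omega : ((n+k-2*j : ℕ) : ℤ) - (l:ℤ) < 0)]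
    ring
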